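/- Let P be a finite poset and [φ₀, φ_k] = {φ₀,…,φ_k} an interval in P, enumerated compatibly with the order. Define the k×k matrix M with rows indexed by 0,…,k−1 and columns by 1,…,k, with m_{ij} = 1 if φᵢ ≤ φⱼ and 0 otherwise. Then the Möbius function satisfies μ([φ₀, φ_k]) = (−1)^k det M. -/
import Mathlib


open Classical

/-- A determinantal expression for the Möbius function of a finite interval
`[φ 0, φ k]` of a poset, enumerated compatibly with the order:
`μ(φ 0, φ k) = (-1)^k det M` where `M` is the `k × k` matrix with rows `φ 0, …, φ (k-1)`,
columns `φ 1, …, φ k`, and entries `1` if `φ i ≤ φ j` and `0` otherwise. -/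
theorem moebius_eq_det {α : Type*} [PartialOrder α] [LocallyFiniteOrder α] [DecidableEq α]
    (k : ℕ) (hk : 0 < k) (φ : ℕ → α)
    (hbij : Set.BijOn φ (Set.Iic k) (Set.Icc (φ 0) (φ k)))
    (hcompat : ∀ i ≤ k, ∀ j ≤ k, φ i ≤ φ j → i ≤ j) :
    IncidenceAlgebra.mu ℤ (φ 0) (φ k)
      = (-1 : ℤ) ^ k *
        Matrix.det (Matrix.of fun i j : Fin k =>
          if φ (i : ℕ) ≤ φ ((j : ℕ) + 1) then (1 : ℤ) else 0) := by
  classical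
  -- zeta matrix
  set Z : Matrix (Fin (k + 1)) (Fin (k + 1)) ℤ :=
    Matrix.of fun i j => if φ (i : ℕ) ≤ φ (j : ℕ) then (1 : ℤ) else 0 with hZ
  have hle : ∀ i : Fin (k + 1), (i : ℕ) ≤ k := fun i => Nat.lt_succ_iff.mp i.isLt
  -- Z is upper triangular
  have htri : Z.BlockTriangular id := by
    intro i j hij
    have hne : ¬ φ (i : ℕ) ≤ φ (j : ℕ) := fun hφ =>
      absurd (hcompat _ (hle i) _ (hle j) hφ) (Nat.not_le.mpr hij)
    simp [hZ, hne]
  have hdet : Z.det = 1 := by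
    rw [Matrix.det_of_upperTriangular htri]
    simp [hZ]
  have hunit : IsUnit Z.det := by rw [hdet]; exact isUnit_one
  -- the mu vector
  set v : Fin (k + 1) → ℤ := fun i => IncidenceAlgebra.mu ℤ (φ 0) (φ (i : ℕ)) with hv
  have hvZ : Matrix.vecMul v Z = Pi.single (0 : Fin (k + 1)) 1 := by
    funext j
    have hmaps := hbij.mapsTo
    have hφ0 : ∀ i : Fin (k + 1), φ 0 ≤ φ (i : ℕ) := fun i =>
      (hmaps (Set.mem_Iic.mpr (hle i))).1
    have hφk : ∀ i : Fin (k + 1), φ (i : ℕ) ≤ φ k := fun i =>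
      (hmaps (Set.mem_Iic.mpr (hle i))).2
    have key : Matrix.vecMul v Z j
        = ∑ x ∈ Finset.Icc (φ 0) (φ (j : ℕ)), IncidenceAlgebra.mu ℤ (φ 0) x := by
      have hvec : Matrix.vecMul v Z j = ∑ i : Fin (k + 1), v i * Z i j := by
        simp [Matrix.vecMul, dotProduct]
      rw [hvec]
      rw [← Finset.sum_filter_add_sum_filter_not Finset.univ (fun i : Fin (k + 1) => φ (i : ℕ) ≤ φ (j : ℕ))]
      have h2 : ∑ i ∈ Finset.univ.filter (fun i : Fin (k+1) => ¬ φ (i : ℕ) ≤ φ (j : ℕ)),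
          v i * Z i j = 0 := by
        apply Finset.sum_eq_zero
        intro i hi
        simp only [Finset.mem_filter] at hi
        simp [hZ, hi.2]
      rw [h2, add_zero]
      refine Finset.sum_bij (fun i _ => φ (i : ℕ)) ?_ ?_ ?_ ?_
      · intro i hi
        simp only [Finset.mem_filter] at hi
        exact Finset.mem_Icc.mpr ⟨hφ0 i, hi.2⟩
      · intro a ha b hb hab
        simp only [Finset.mem_filter] at ha hb
        exact Fin.ext (hbij.injOn (Set.mem_Iic.mpr (hle a)) (Set.mem_Iic.mpr (hle b)) hab)
      · intro x hx
        rw [Finset.mem_Icc] at hx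
        obtain ⟨i, hi, hφi⟩ := hbij.surjOn
          (Set.mem_Icc.mpr ⟨hx.1, le_trans hx.2 (hφk j)⟩)
        refine ⟨⟨i, Nat.lt_succ_iff.mpr hi⟩, ?_, hφi⟩
        simp only [Finset.mem_filter]
        exact ⟨Finset.mem_univ _, by rw [hφi]; exact hx.2⟩
      · intro i hi
        simp only [Finset.mem_filter] at hi
        simp [hv, hZ, hi.2]
    rw [key, IncidenceAlgebra.sum_Icc_mu_right]
    have hiff : φ 0 = φ (j : ℕ) ↔ (0 : Fin (k + 1)) = j := by
      constructor
      · intro h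
        exact Fin.ext (hbij.injOn (Set.mem_Iic.mpr (Nat.zero_le _))
          (Set.mem_Iic.mpr (hle j)) (by simpa using h))
      · intro h; rw [← h]; rfl
    by_cases h : (0 : Fin (k + 1)) = j
    · rw [if_pos (hiff.mpr h), ← h]; simp
    · rw [if_neg (fun hh => h (hiff.mp hh)), Pi.single_eq_of_ne (Ne.symm h)]
  -- solve the linear system
  have hv_eq : v = Matrix.vecMul (Pi.single (0 : Fin (k + 1)) 1) Z⁻¹ := by
    rw [← hvZ, Matrix.vecMul_vecMul, Matrix.mul_nonsing_inv Z hunit, Matrix.vecMul_one]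
  have hvlast : v (Fin.last k) = Z⁻¹ 0 (Fin.last k) := by
    rw [hv_eq]
    simp [Matrix.vecMul, dotProduct, Pi.single_apply]
  have hinv : Z⁻¹ = Z.adjugate := by
    rw [Matrix.inv_def, hdet]; simp
  have hadj : Z.adjugate 0 (Fin.last k)
      = (-1 : ℤ) ^ k * Matrix.det (Z.submatrix (Fin.last k).succAbove
          (0 : Fin (k + 1)).succAbove) := by
    rw [Matrix.adjugate_fin_succ_eq_det_submatrix]
    norm_num
  have hsub : Z.submatrix (Fin.last k).succAbove (0 : Fin (k + 1)).succAbove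
      = Matrix.of fun i j : Fin k =>
          if φ (i : ℕ) ≤ φ ((j : ℕ) + 1) then (1 : ℤ) else 0 := by
    ext i j
    simp [hZ, Fin.succAbove_last, Fin.succAbove_zero]
  have : v (Fin.last k) = IncidenceAlgebra.mu ℤ (φ 0) (φ k) := by simp [hv]
  rw [← this, hvlast, hinv, hadj, hsub]
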